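/- The super domination number of the friendship graph F_n equals n+1. -/

import Mathlib

open SimpleGraph

/-- A super dominating set: a dominating set `S` such that every vertex `u ∉ S`
has a private "super" dominator `v ∈ S` with `N(v) ∩ (V \ S) = {u}`. -/
def IsSuperDominatingSet {V : Type*} (G : SimpleGraph V) (S : Finset V) : Prop :=
  (∀ u ∉ S, ∃ v ∈ S, G.Adj v u) ∧
  (∀ u ∉ S, ∃ v ∈ S, ∀ w, (G.Adj v w ∧ w ∉ S) ↔ w = u)

/-- The super domination number: minimum size of a super dominating set. -/
noncomputable def superDominationNumber {V : Type*} (G : SimpleGraph V) : ℕ :=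
  sInf {n | ∃ S : Finset V, IsSuperDominatingSet G S ∧ S.card = n}

/-- The friendship graph `F n`: `n` triangles sharing the common vertex `0`.
For `1 ≤ i`, vertices `2k+1` and `2k+2` form the `k`-th triangle with the centre. -/
def friendshipGraph (n : ℕ) : SimpleGraph (Fin (2 * n + 1)) :=
  SimpleGraph.fromRel (fun i j =>
    i.val = 0 ∨ j.val = 0 ∨ (i.val + 1) / 2 = (j.val + 1) / 2)

lemma friendship_adj {n : ℕ} (a b : Fin (2 * n + 1)) :
    (friendshipGraph n).Adj a b ↔
      a.val ≠ b.val ∧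
        (a.val = 0 ∨ b.val = 0 ∨ (a.val + 1) / 2 = (b.val + 1) / 2) := by
  simp only [friendshipGraph, SimpleGraph.fromRel_adj, ne_eq, Fin.ext_iff]
  constructor
  · rintro ⟨h1, h2⟩
    exact ⟨h1, by omega⟩
  · rintro ⟨h1, h2⟩
    exact ⟨h1, Or.inl h2⟩

lemma superDom_lower {n : ℕ} (S : Finset (Fin (2 * n + 1)))
    (hS : IsSuperDominatingSet (friendshipGraph n) S) : n + 1 ≤ S.card := by
  classical
  obtain ⟨-, h2⟩ := hS
  have hcompl : (Sᶜ).card ≤ S.card := by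
    apply Finset.card_le_card_of_injOn
      (fun u => if h : u ∉ S then (h2 u h).choose else ⟨0, by omega⟩)
    · intro u hu
      simp only [Finset.coe_compl, Set.mem_compl_iff, Finset.mem_coe, Finset.mem_compl] at hu
      simp only [dif_pos hu]
      exact (h2 u hu).choose_spec.1
    · intro a ha b hb hab
      simp only [Finset.coe_compl, Set.mem_compl_iff, Finset.mem_coe] at ha hb
      simp only [dif_pos ha, dif_pos hb] at hab
      have sa := (h2 a ha).choose_spec.2
      have sb := (h2 b hb).choose_spec.2
      have hadj : (friendshipGraph n).Adj (h2 a ha).choose a ∧ a ∉ S := (sa a).mpr rfl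
      rw [hab] at hadj
      exact (sb a).mp hadj
  have h1 : (Sᶜ).card = Fintype.card (Fin (2 * n + 1)) - S.card := Finset.card_compl S
  have h3 : S.card ≤ Fintype.card (Fin (2 * n + 1)) := S.card_le_univ
  rw [Fintype.card_fin] at h1 h3
  omega

lemma superDom_upper (n : ℕ) :
    ∃ S : Finset (Fin (2 * n + 1)),
      IsSuperDominatingSet (friendshipGraph n) S ∧ S.card = n + 1 := by
  classical
  set S : Finset (Fin (2 * n + 1)) :=
    insert ⟨0, by omega⟩
      ((Finset.univ : Finset (Fin n)).image fun k =>
        (⟨2 * k.val + 1, by omega⟩ : Fin (2 * n + 1))) with hSdef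
  have hmem : ∀ u : Fin (2 * n + 1),
      u ∈ S ↔ u.val = 0 ∨ ∃ k, k < n ∧ u.val = 2 * k + 1 := by
    intro u
    simp only [hSdef, Finset.mem_insert, Finset.mem_image, Finset.mem_univ, true_and,
      Fin.ext_iff]
    constructor
    · rintro (h | ⟨k, h⟩)
      · exact Or.inl h
      · exact Or.inr ⟨k.val, k.isLt, h.symm⟩
    · rintro (h | ⟨k, hk, h⟩)
      · exact Or.inl h
      · exact Or.inr ⟨⟨k, hk⟩, h.symm⟩
  have hnot : ∀ u : Fin (2 * n + 1), u ∉ S → ∃ k, k < n ∧ u.val = 2 * k + 2 := by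
    intro u hu
    rw [hmem] at hu
    push_neg at hu
    obtain ⟨hu0, hu1⟩ := hu
    have h := hu1 (u.val / 2)
    have hb := u.isLt
    refine ⟨u.val / 2 - 1, by omega, by omega⟩
  have h0S : (⟨0, by omega⟩ : Fin (2 * n + 1)) ∈ S :=
    (hmem _).mpr (Or.inl rfl)
  refine ⟨S, ⟨?_, ?_⟩, ?_⟩
  · intro u hu
    refine ⟨⟨0, by omega⟩, h0S, ?_⟩
    rw [friendship_adj]
    have : u.val ≠ 0 := by
      intro h
      exact hu ((hmem u).mpr (Or.inl h))
    refine ⟨?_, Or.inl rfl⟩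
    show (0 : ℕ) ≠ u.val
    omega
  · intro u hu
    obtain ⟨k, hk, hval⟩ := hnot u hu
    refine ⟨⟨2 * k + 1, by omega⟩, (hmem _).mpr (Or.inr ⟨k, hk, rfl⟩), ?_⟩
    have hvval : (⟨2 * k + 1, by omega⟩ : Fin (2 * n + 1)).val = 2 * k + 1 := rfl
    intro w
    constructor
    · rintro ⟨hadj, hwS⟩
      rw [friendship_adj] at hadj
      have hw0 : w.val ≠ 0 := by
        intro h
        exact hwS ((hmem w).mpr (Or.inl h))
      have hwodd : w.val ≠ 2 * k + 1 := by
        intro h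
        exact hwS ((hmem w).mpr (Or.inr ⟨k, hk, h⟩))
      rw [hvval] at hadj
      obtain ⟨hne, h | h | h⟩ := hadj
      · omega
      · omega
      · have : w.val = u.val := by omega
        exact Fin.ext this
    · rintro rfl
      refine ⟨?_, hu⟩
      rw [friendship_adj, hvval]
      exact ⟨by omega, Or.inr (Or.inr (by omega))⟩
  · rw [hSdef, Finset.card_insert_of_notMem, Finset.card_image_of_injOn,
      Finset.card_univ, Fintype.card_fin]
    · intro a _ b _ hab
      simp only [Fin.ext_iff] at hab ⊢
      omega
    · simp only [Finset.mem_image, Finset.mem_univ, true_and, Fin.ext_iff]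
      rintro ⟨k, h⟩
      omega

/-- The super domination number of the friendship graph `F n` equals `n + 1`. -/
theorem stmt5 (n : ℕ) :
    superDominationNumber (friendshipGraph n) = n + 1 := by
  obtain ⟨S, hS, hcard⟩ := superDom_upper n
  apply le_antisymm
  · exact Nat.sInf_le ⟨S, hS, hcard⟩
  · refine le_csInf ⟨n + 1, ⟨S, hS, hcard⟩⟩ ?_
    rintro m ⟨T, hT, rfl⟩
    exact superDom_lower T hT
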